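/- Let x̄ ∈ ℝⁿ and let P ⊆ Ω be a measurable set with ℙ(P) > 0. Suppose ŷ : Ω → ℝⁿ is a measurable, integrable function such that for every ξ ∈ P, ŷ(ξ) ≥ 0, W ŷ(ξ) = h(ξ) − T(ξ) x̄, and qᵀ ŷ(ξ) = Q(x̄, ξ) (i.e., ŷ(ξ) is an optimal solution of the subproblem). Then Q(x̄, E[ξ|P]) ≤ E[ Q(x̄, ·) | P ]; that is, the aggregated subproblem value is a lower bound on the conditional expected subproblem value. -/

import Mathlib

open MeasureTheory Matrix
open RealInnerProductSpace

/-- Conditional average `E[g | P] = (1/ℙ(P)) ∫_P g dℙ`. -/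
noncomputable def condAvg {Ω : Type*} [MeasurableSpace Ω] (μ : Measure Ω) (P : Set Ω)
    {E : Type*} [NormedAddCommGroup E] [NormedSpace ℝ E] (g : Ω → E) : E :=
  ((μ P).toReal)⁻¹ • ∫ ξ in P, g ξ ∂μ

/-- LP value function `inf { qᵀ y : W y = b, y ≥ 0 }`. -/
noncomputable def lpVal {m n : ℕ} (W : Matrix (Fin m) (Fin n) ℝ) (q : Fin n → ℝ)
    (b : Fin m → ℝ) : ℝ :=
  sInf {v : ℝ | ∃ y : Fin n → ℝ, (∀ j, 0 ≤ y j) ∧ W.mulVec y = b ∧ v = q ⬝ᵥ y}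


lemma coneReduce {E : Type*} [AddCommGroup E] [Module ℝ E] {n : ℕ} (v : Fin n → E) :
    ∀ s : Finset (Fin n), ∀ y : Fin n → ℝ, (∀ j, 0 ≤ y j) → (∀ j ∉ s, y j = 0) →
    ∃ t : Finset (Fin n), t ⊆ s ∧ LinearIndependent ℝ (fun j : t => v j) ∧
      ∃ z : Fin n → ℝ, (∀ j, 0 ≤ z j) ∧ (∀ j ∉ t, z j = 0) ∧
        ∑ j, z j • v j = ∑ j, y j • v j := by
  intro s
  induction s using Finset.strongInductionOn with
  | _ s ih =>
    intro y hy hsupp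
    by_cases hli : LinearIndependent ℝ (fun j : s => v j)
    · exact ⟨s, subset_rfl, hli, y, hy, hsupp, rfl⟩
    · obtain ⟨g, hg0, i0, hgi0⟩ := Fintype.not_linearIndependent_iff.mp hli
      set c0 : Fin n → ℝ := fun j => if h : j ∈ s then g ⟨j, h⟩ else 0 with hc0
      have hcsum : ∀ c : Fin n → ℝ, (∀ j ∉ s, c j = 0) → ∑ j, c j • v j = ∑ j ∈ s, c j • v j := by
        intro c hc
        exact (Finset.sum_subset (Finset.subset_univ s) (fun j _ hj => by
          rw [hc j hj, zero_smul])).symm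
      have hc0supp : ∀ j ∉ s, c0 j = 0 := fun j hj => by simp [hc0, hj]
      have hc0sum : ∑ j, c0 j • v j = 0 := by
        rw [hcsum c0 hc0supp]
        rw [← Finset.sum_attach s (fun j => c0 j • v j)]
        have : ∀ i : s, c0 i.1 • v i.1 = g i • v i.1 := by
          intro i; simp [hc0, i.2]
        rw [Finset.sum_congr rfl (fun i _ => this i)]
        exact hg0
      -- choose a coefficient vector with a positive entry somewhere in s
      have key : ∀ c : Fin n → ℝ, (∀ j ∉ s, c j = 0) → (∑ j, c j • v j = 0) →
          (∃ j ∈ s, 0 < c j) →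
          ∃ t : Finset (Fin n), t ⊆ s ∧ LinearIndependent ℝ (fun j : t => v j) ∧
          ∃ z : Fin n → ℝ, (∀ j, 0 ≤ z j) ∧ (∀ j ∉ t, z j = 0) ∧
            ∑ j, z j • v j = ∑ j, y j • v j := by
        intro c hcs hcz ⟨jp, hjps, hjp⟩
        have hFne : (s.filter (fun j => 0 < c j)).Nonempty := ⟨jp, Finset.mem_filter.2 ⟨hjps, hjp⟩⟩
        obtain ⟨j0, hj0F, hj0min⟩ := Finset.exists_min_image _ (fun j => y j / c j) hFne
        obtain ⟨hj0s, hj0pos⟩ := Finset.mem_filter.mp hj0F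
        set r : ℝ := y j0 / c j0 with hr
        have hr0 : 0 ≤ r := div_nonneg (hy j0) hj0pos.le
        set z : Fin n → ℝ := fun j => y j - r * c j with hz
        have hznn : ∀ j, 0 ≤ z j := by
          intro j
          by_cases hcj : 0 < c j
          · have hjs : j ∈ s := by
              by_contra hjs; rw [hcs j hjs] at hcj; exact lt_irrefl 0 hcj
            have := hj0min j (Finset.mem_filter.2 ⟨hjs, hcj⟩)
            have : r * c j ≤ y j := by
              rw [hr]
              calc y j0 / c j0 * c j ≤ y j / c j * c j := by
                    exact mul_le_mul_of_nonneg_right this hcj.le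
                _ = y j := div_mul_cancel₀ _ hcj.ne'
            simp only [hz]; linarith [this]
          · push_neg at hcj
            have : r * c j ≤ 0 := mul_nonpos_of_nonneg_of_nonpos hr0 hcj
            have := hy j
            simp only [hz]; linarith
        have hzj0 : z j0 = 0 := by
          simp only [hz, hr]
          field_simp
          ring
        have hzsupp : ∀ j ∉ s.erase j0, z j = 0 := by
          intro j hj
          rw [Finset.mem_erase] at hj
          push_neg at hj
          by_cases hje : j = j0
          · rw [hje]; exact hzj0
          · have hjs : j ∉ s := hj hje
            simp only [hz, hsupp j hjs, hcs j hjs, mul_zero, sub_zero]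
        have hzsum : ∑ j, z j • v j = ∑ j, y j • v j := by
          have : ∀ j, z j • v j = y j • v j - (r * c j) • v j := by
            intro j; simp only [hz, sub_smul]
          rw [Finset.sum_congr rfl (fun j _ => this j), Finset.sum_sub_distrib]
          have : ∑ j, (r * c j) • v j = r • ∑ j, c j • v j := by
            rw [Finset.smul_sum]
            exact Finset.sum_congr rfl (fun j _ => by rw [smul_smul])
          rw [this, hcz, smul_zero, sub_zero]
        obtain ⟨t, hts, htli, w, hw0, hwsupp, hwsum⟩ :=
          ih (s.erase j0) (Finset.erase_ssubset hj0s) z hznn hzsupp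
        exact ⟨t, hts.trans (Finset.erase_subset _ _), htli, w, hw0, hwsupp,
          hwsum.trans hzsum⟩
      -- apply key to c0 or -c0
      by_cases hpos : ∃ j ∈ s, 0 < c0 j
      · exact key c0 hc0supp hc0sum hpos
      · apply key (-c0) (fun j hj => by simp [hc0supp j hj])
        · rw [← neg_zero, ← hc0sum, ← Finset.sum_neg_distrib]
          exact Finset.sum_congr rfl (fun j _ => by rw [Pi.neg_apply, neg_smul])
        · push_neg at hpos
          refine ⟨i0.1, i0.2, ?_⟩
          have hne : c0 i0.1 ≠ 0 := by simp [hc0, i0.2, hgi0]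
          have := hpos i0.1 i0.2
          have : c0 i0.1 < 0 := lt_of_le_of_ne this hne
          simpa using neg_pos.mpr this


lemma orthantClosed {ι : Type*} [Fintype ι] : IsClosed {w : ι → ℝ | ∀ i, 0 ≤ w i} := by
  have : {w : ι → ℝ | ∀ i, 0 ≤ w i} = ⋂ i, {w | 0 ≤ w i} := by ext; simp [Set.mem_iInter]
  rw [this]
  exact isClosed_iInter fun i => isClosed_le continuous_const (continuous_apply i)

lemma conePieceClosed {E : Type*} [NormedAddCommGroup E] [NormedSpace ℝ E] {n : ℕ}
    (v : Fin n → E) (t : Finset (Fin n)) (hli : LinearIndependent ℝ (fun j : t => v j)) :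
    IsClosed {x : E | ∃ z : Fin n → ℝ, (∀ j, 0 ≤ z j) ∧ (∀ j ∉ t, z j = 0) ∧
      x = ∑ j, z j • v j} := by
  classical
  set L : ({j // j ∈ t} → ℝ) →ₗ[ℝ] E :=
    { toFun := fun w => ∑ i : t, w i • v i.1
      map_add' := by
        intro a b
        simp [add_smul, Finset.sum_add_distrib]
      map_smul' := by
        intro m a
        simp [smul_smul, Finset.smul_sum] } with hL
  have hinj : LinearMap.ker L = ⊥ := by
    rw [LinearMap.ker_eq_bot']
    intro w hw
    have := Fintype.linearIndependent_iff.mp hli w hw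
    funext i; exact this i
  have hemb := LinearMap.isClosedEmbedding_of_injective hinj
  have hsub : ∀ (z : Fin n → ℝ), (∀ j ∉ t, z j = 0) →
      ∑ i : t, z i.1 • v i.1 = ∑ j, z j • v j := by
    intro z hzs
    rw [Finset.sum_coe_sort t (fun j => z j • v j)]
    exact Finset.sum_subset (Finset.subset_univ t) fun j _ hj => by rw [hzs j hj, zero_smul]
  have hset : {x : E | ∃ z : Fin n → ℝ, (∀ j, 0 ≤ z j) ∧ (∀ j ∉ t, z j = 0) ∧
      x = ∑ j, z j • v j} = L '' {w | ∀ i, 0 ≤ w i} := by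
    ext x
    constructor
    · rintro ⟨z, hz0, hzs, rfl⟩
      refine ⟨fun i => z i.1, fun i => hz0 i.1, ?_⟩
      simp only [hL, LinearMap.coe_mk, AddHom.coe_mk]
      show ∑ i : t, z i.1 • v i.1 = _
      rw [show (Finset.univ : Finset {x // x ∈ t}) = t.attach from rfl,
        Finset.sum_attach t (fun j => z j • v j)]
      exact Finset.sum_subset (Finset.subset_univ t) fun j _ hj => by
        rw [hzs j hj, zero_smul]
    · rintro ⟨w, hw, rfl⟩
      refine ⟨fun j => if h : j ∈ t then w ⟨j, h⟩ else 0, ?_, ?_, ?_⟩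
      · intro j; by_cases h : j ∈ t
        · simp only [dif_pos h]; exact hw _
        · simp [h]
      · intro j hj; simp [hj]
      · simp only [hL, LinearMap.coe_mk, AddHom.coe_mk]
        rw [← hsub (fun j => if h : j ∈ t then w ⟨j, h⟩ else 0) (fun j hj => dif_neg hj)]
        show ∑ i : t, w i • v i.1 = _
        rw [show (Finset.univ : Finset {x // x ∈ t}) = t.attach from rfl]
        exact Finset.sum_congr rfl (fun i _ => by rw [dif_pos i.2])
  rw [hset]
  exact hemb.isClosedMap _ orthantClosed

lemma coneReduce' {E : Type*} [AddCommGroup E] [Module ℝ E] {n : ℕ} (v : Fin n → E)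
    (y : Fin n → ℝ) (hy : ∀ j, 0 ≤ y j) :
    ∃ t : Finset (Fin n), LinearIndependent ℝ (fun j : t => v j) ∧
      ∃ z : Fin n → ℝ, (∀ j, 0 ≤ z j) ∧ (∀ j ∉ t, z j = 0) ∧
        ∑ j, z j • v j = ∑ j, y j • v j := by
  obtain ⟨t, _, hli, z, hz⟩ := coneReduce v Finset.univ y hy (by simp)
  exact ⟨t, hli, z, hz⟩

lemma coneClosed {E : Type*} [NormedAddCommGroup E] [NormedSpace ℝ E] {n : ℕ}
    (v : Fin n → E) :
    IsClosed {x : E | ∃ y : Fin n → ℝ, (∀ j, 0 ≤ y j) ∧ x = ∑ j, y j • v j} := by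
  classical
  have : {x : E | ∃ y : Fin n → ℝ, (∀ j, 0 ≤ y j) ∧ x = ∑ j, y j • v j} =
      ⋃ t : Finset (Fin n), {x : E | LinearIndependent ℝ (fun j : t => v j) ∧
        ∃ z : Fin n → ℝ, (∀ j, 0 ≤ z j) ∧ (∀ j ∉ t, z j = 0) ∧ x = ∑ j, z j • v j} := by
    ext x
    constructor
    · rintro ⟨y, hy, rfl⟩
      obtain ⟨t, hli, z, hz0, hzs, hsum⟩ := coneReduce' v y hy
      exact Set.mem_iUnion.2 ⟨t, hli, z, hz0, hzs, hsum.symm⟩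
    · rintro hx
      obtain ⟨t, hli, z, hz0, _, rfl⟩ := Set.mem_iUnion.mp hx
      exact ⟨z, hz0, rfl⟩
  rw [this]
  apply isClosed_iUnion_of_finite
  intro t
  by_cases hli : LinearIndependent ℝ (fun j : t => v j)
  · have : {x : E | LinearIndependent ℝ (fun j : t => v j) ∧
        ∃ z : Fin n → ℝ, (∀ j, 0 ≤ z j) ∧ (∀ j ∉ t, z j = 0) ∧ x = ∑ j, z j • v j} =
        {x : E | ∃ z : Fin n → ℝ, (∀ j, 0 ≤ z j) ∧ (∀ j ∉ t, z j = 0) ∧ x = ∑ j, z j • v j} := by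
      ext x; simp [hli]
    rw [this]
    exact conePieceClosed v t hli
  · have : {x : E | LinearIndependent ℝ (fun j : t => v j) ∧
        ∃ z : Fin n → ℝ, (∀ j, 0 ≤ z j) ∧ (∀ j ∉ t, z j = 0) ∧ x = ∑ j, z j • v j} = ∅ := by
      ext x; simp [hli]
    rw [this]
    exact isClosed_empty

lemma farkasAlt {E : Type*} [NormedAddCommGroup E] [InnerProductSpace ℝ E]
    [CompleteSpace E] {n : ℕ} (v : Fin n → E) (b : E) :
    (∃ y : Fin n → ℝ, (∀ j, 0 ≤ y j) ∧ b = ∑ j, y j • v j) ∨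
    ∃ u : E, (∀ j, 0 ≤ ⟪v j, u⟫) ∧ ⟪u, b⟫ < 0 := by
  classical
  set C : Set E := {x : E | ∃ y : Fin n → ℝ, (∀ j, 0 ≤ y j) ∧ x = ∑ j, y j • v j} with hC
  by_cases hb : b ∈ C
  · exact Or.inl hb
  · right
    set K : ConvexCone ℝ E :=
      { carrier := C
        smul_mem' := by
          rintro c hc x ⟨y, hy, rfl⟩
          exact ⟨fun j => c * y j, fun j => mul_nonneg hc.le (hy j), by
            rw [Finset.smul_sum]; exact Finset.sum_congr rfl fun j _ => smul_smul c (y j) (v j)⟩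
        add_mem' := by
          rintro x ⟨y, hy, rfl⟩ x' ⟨y', hy', rfl⟩
          exact ⟨fun j => y j + y' j, fun j => add_nonneg (hy j) (hy' j), by
            rw [← Finset.sum_add_distrib]
            exact Finset.sum_congr rfl fun j _ => (add_smul (y j) (y' j) (v j)).symm⟩ } with hK
    have hne : (K : Set E).Nonempty := ⟨0, ⟨fun _ => 0, fun j => le_refl 0, by simp⟩⟩
    obtain ⟨u, hu1, hu2⟩ : ∃ u : E, (∀ x ∈ K, 0 ≤ ⟪x, u⟫) ∧ ⟪u, b⟫ < 0 := by
      obtain ⟨u, hu1, hu2⟩ := ProperCone.hyperplane_separation'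
        (C := { toSubmodule := K.toPointedCone (⟨fun _ => 0, fun j => le_refl 0, by simp⟩ : (0:E) ∈ C),
                isClosed' := coneClosed v }) hb
      exact ⟨u, hu1, by rwa [real_inner_comm]⟩
    refine ⟨u, fun j => ?_, hu2⟩
    apply hu1
    refine ⟨fun i => if i = j then 1 else 0, fun i => by positivity, ?_⟩
    simp [ite_smul]

lemma existsNegRay {m n : ℕ} (W : Matrix (Fin m) (Fin n) ℝ) (q : Fin n → ℝ)
    (b₀ : Fin m → ℝ)
    (hunb : ¬ BddBelow {v : ℝ | ∃ y : Fin n → ℝ, (∀ j, 0 ≤ y j) ∧ W.mulVec y = b₀ ∧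
      v = q ⬝ᵥ y}) :
    ∃ d : Fin n → ℝ, (∀ j, 0 ≤ d j) ∧ W.mulVec d = 0 ∧ q ⬝ᵥ d < 0 := by
  classical
  set v : Fin n → EuclideanSpace ℝ (Fin (m+1)) := fun j => WithLp.toLp 2 (Fin.snoc (fun i => W i j) (q j) : Fin (m+1) → ℝ) with hv
  set b : EuclideanSpace ℝ (Fin (m+1)) := WithLp.toLp 2 (Fin.snoc (0 : Fin m → ℝ) (-1) : Fin (m+1) → ℝ) with hb
  have happ : ∀ (y : Fin n → ℝ) (i : Fin (m+1)),
      (∑ j, y j • v j) i = ∑ j, y j * v j i := by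
    intro y i
    rw [WithLp.ofLp_sum, Finset.sum_apply]
    rfl
  rcases farkasAlt v b with ⟨y, hy, hbeq⟩ | ⟨u, hu1, hu2⟩
  · refine ⟨y, hy, ?_, ?_⟩
    · funext i
      have := congrArg (fun x => x (Fin.castSucc i)) hbeq
      rw [happ] at this
      simp only [hb, hv, Fin.snoc_castSucc, Pi.zero_apply] at this
      show (fun j => W i j) ⬝ᵥ y = (0 : Fin m → ℝ) i
      simp only [dotProduct, Pi.zero_apply]
      rw [show ∑ j, W i j * y j = ∑ j, y j * W i j from
        Finset.sum_congr rfl fun j _ => mul_comm _ _]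
      exact this.symm
    · have := congrArg (fun x => x (Fin.last m)) hbeq
      rw [happ] at this
      simp only [hb, hv, Fin.snoc_last] at this
      rw [show q ⬝ᵥ y = ∑ j, y j * q j from
        Finset.sum_congr rfl fun j _ => mul_comm _ _]
      rw [← this]; norm_num
  · exfalso
    apply hunb
    set u' : Fin m → ℝ := fun i => u (Fin.castSucc i) with hu'
    set t : ℝ := u (Fin.last m) with htdef
    have hinner : ∀ x z : EuclideanSpace ℝ (Fin (m+1)), ⟪x, z⟫ = ∑ i, x i * z i := by
      intro x z
      rw [PiLp.inner_apply]
      simp [RCLike.inner_apply, conj_trivial, mul_comm]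
    have ht : 0 < t := by
      rw [hinner] at hu2
      rw [Fin.sum_univ_castSucc] at hu2
      simp only [hb, Fin.snoc_castSucc, Fin.snoc_last, Pi.zero_apply] at hu2
      simp only [mul_zero, Finset.sum_const_zero, zero_add] at hu2
      nlinarith
    have hS : ∀ j, 0 ≤ (∑ i, W i j * u' i) + q j * t := by
      intro j
      have := hu1 j
      rw [hinner, Fin.sum_univ_castSucc] at this
      simp only [hv, Fin.snoc_castSucc, Fin.snoc_last] at this
      exact this
    refine ⟨-(b₀ ⬝ᵥ u') / t, ?_⟩
    rintro r ⟨y, hy, hWy, rfl⟩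
    rw [div_le_iff₀ ht]
    have hexp : b₀ ⬝ᵥ u' = ∑ j, y j * (∑ i, W i j * u' i) := by
      rw [← hWy]
      simp only [dotProduct, mulVec, Finset.sum_mul]
      rw [Finset.sum_comm]
      refine Finset.sum_congr rfl fun j _ => ?_
      rw [Finset.mul_sum]
      exact Finset.sum_congr rfl fun i _ => by ring
    have : 0 ≤ q ⬝ᵥ y * t + b₀ ⬝ᵥ u' := by
      rw [hexp, dotProduct, Finset.sum_mul, ← Finset.sum_add_distrib]
      refine Finset.sum_nonneg fun j _ => ?_
      have : q j * y j * t + y j * ∑ i, W i j * u' i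
          = y j * ((∑ i, W i j * u' i) + q j * t) := by ring
      rw [this]
      exact mul_nonneg (hy j) (hS j)
    linarith

/-- dot product with `q` as a linear map -/
noncomputable def dotLM {n : ℕ} (q : Fin n → ℝ) : (Fin n → ℝ) →ₗ[ℝ] ℝ where
  toFun y := q ⬝ᵥ y
  map_add' a b := by simp [dotProduct, mul_add, Finset.sum_add_distrib]
  map_smul' r a := by simp [dotProduct, Finset.mul_sum, mul_left_comm]

/-- `A ↦ (of A).mulVec xbar` as a linear map -/
noncomputable def mulXLM {m n : ℕ} (xbar : Fin n → ℝ) :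
    (Fin m → Fin n → ℝ) →ₗ[ℝ] (Fin m → ℝ) where
  toFun A := (Matrix.of A).mulVec xbar
  map_add' A B := by
    funext i
    simp [Matrix.mulVec, dotProduct, add_mul, Finset.sum_add_distrib]
  map_smul' r A := by
    funext i
    simp [Matrix.mulVec, dotProduct, Finset.mul_sum, mul_assoc]


theorem stmt3 {Ω : Type*} [MeasurableSpace Ω] (μ : Measure Ω) [IsProbabilityMeasure μ]
    {m n : ℕ} (W : Matrix (Fin m) (Fin n) ℝ) (q : Fin n → ℝ)
    (h : Ω → Fin m → ℝ) (T : Ω → Fin m → Fin n → ℝ)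
    (hh_meas : Measurable h) (hh_int : Integrable h μ)
    (hT_meas : Measurable T) (hT_int : Integrable T μ)
    (xbar : Fin n → ℝ) (P : Set Ω) (hPmeas : MeasurableSet P) (hPpos : 0 < μ P)
    (yhat : Ω → Fin n → ℝ) (hy_meas : Measurable yhat) (hy_int : Integrable yhat μ)
    (hy_nonneg : ∀ ξ ∈ P, ∀ j, 0 ≤ yhat ξ j)
    (hy_feas : ∀ ξ ∈ P, W.mulVec (yhat ξ) = h ξ - (Matrix.of (T ξ)).mulVec xbar)
    (hy_opt : ∀ ξ ∈ P, q ⬝ᵥ yhat ξ = lpVal W q (h ξ - (Matrix.of (T ξ)).mulVec xbar)) :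
    lpVal W q (condAvg μ P h - (Matrix.of (condAvg μ P T)).mulVec xbar) ≤
      condAvg μ P (fun ξ => lpVal W q (h ξ - (Matrix.of (T ξ)).mulVec xbar)) := by
  classical
  set c : ℝ := ((μ P).toReal)⁻¹ with hc
  have hc0 : 0 ≤ c := inv_nonneg.mpr ENNReal.toReal_nonneg
  set ybar : Fin n → ℝ := condAvg μ P yhat with hybar
  have hyP : Integrable yhat (μ.restrict P) := hy_int.restrict
  have hhP : Integrable h (μ.restrict P) := hh_int.restrict
  have hTP : Integrable T (μ.restrict P) := hT_int.restrict
  -- nonnegativity of ybar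
  have hybar_nn : ∀ j, 0 ≤ ybar j := by
    intro j
    have happ : (∫ ξ in P, yhat ξ ∂μ) j = ∫ ξ in P, yhat ξ j ∂μ := by
      have := (ContinuousLinearMap.proj (R := ℝ) (φ := fun _ : Fin n => ℝ)
        j).integral_comp_comm hyP
      simpa using this.symm
    have : ybar j = c * (∫ ξ in P, yhat ξ ∂μ) j := rfl
    rw [this, happ]
    exact mul_nonneg hc0 (setIntegral_nonneg hPmeas fun ξ hξ => hy_nonneg ξ hξ j)
  -- feasibility of ybar
  have hW : W.mulVec ybar = condAvg μ P h - (Matrix.of (condAvg μ P T)).mulVec xbar := by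
    have h1 : W.mulVec (∫ ξ in P, yhat ξ ∂μ) = ∫ ξ in P, W.mulVec (yhat ξ) ∂μ := by
      have := ((Matrix.mulVecLin W).toContinuousLinearMap).integral_comp_comm hyP
      simpa [Matrix.mulVecLin_apply] using this.symm
    have h2 : ∫ ξ in P, W.mulVec (yhat ξ) ∂μ
        = ∫ ξ in P, (h ξ - (Matrix.of (T ξ)).mulVec xbar) ∂μ :=
      setIntegral_congr_fun hPmeas fun ξ hξ => hy_feas ξ hξ
    have hMT_int : Integrable (fun ξ => (Matrix.of (T ξ)).mulVec xbar) (μ.restrict P) := by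
      have := ((mulXLM (m := m) xbar).toContinuousLinearMap).integrable_comp hTP
      simpa [mulXLM] using this
    have h3 : ∫ ξ in P, (h ξ - (Matrix.of (T ξ)).mulVec xbar) ∂μ
        = (∫ ξ in P, h ξ ∂μ) - (Matrix.of (∫ ξ in P, T ξ ∂μ)).mulVec xbar := by
      rw [integral_sub hhP hMT_int]
      congr 1
      have := ((mulXLM (m := m) xbar).toContinuousLinearMap).integral_comp_comm hTP
      simpa [mulXLM] using this
    have : W.mulVec ybar = c • ((∫ ξ in P, h ξ ∂μ) - (Matrix.of (∫ ξ in P, T ξ ∂μ)).mulVec xbar) := by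
      rw [hybar, condAvg, Matrix.mulVec_smul, h1, h2, h3]
    rw [this, smul_sub, condAvg, condAvg, ← hc]
    congr 1
    rw [show (Matrix.of (c • ∫ ξ in P, T ξ ∂μ)) = c • Matrix.of (∫ ξ in P, T ξ ∂μ) from rfl,
      Matrix.smul_mulVec]
  -- objective value of ybar
  have hq : q ⬝ᵥ ybar
      = condAvg μ P (fun ξ => lpVal W q (h ξ - (Matrix.of (T ξ)).mulVec xbar)) := by
    have h1 : q ⬝ᵥ (∫ ξ in P, yhat ξ ∂μ) = ∫ ξ in P, q ⬝ᵥ yhat ξ ∂μ := by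
      have := ((dotLM q).toContinuousLinearMap).integral_comp_comm hyP
      exact this.symm
    have h2 : ∫ ξ in P, q ⬝ᵥ yhat ξ ∂μ
        = ∫ ξ in P, lpVal W q (h ξ - (Matrix.of (T ξ)).mulVec xbar) ∂μ :=
      setIntegral_congr_fun hPmeas fun ξ hξ => hy_opt ξ hξ
    have h0 : q ⬝ᵥ ybar = c * (q ⬝ᵥ (∫ ξ in P, yhat ξ ∂μ)) := by
      rw [hybar, condAvg]
      simp [dotProduct, Finset.mul_sum, mul_left_comm, ← hc]
    rw [h0, h1, h2, condAvg]
    simp [hc]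
  set bagg : Fin m → ℝ := condAvg μ P h - (Matrix.of (condAvg μ P T)).mulVec xbar with hbagg
  by_cases hbdd : BddBelow {v : ℝ | ∃ y : Fin n → ℝ, (∀ j, 0 ≤ y j) ∧ W.mulVec y = bagg ∧
      v = q ⬝ᵥ y}
  · rw [← hq]
    exact csInf_le hbdd ⟨ybar, hybar_nn, hW, rfl⟩
  · have hL : lpVal W q bagg = 0 := Real.sInf_of_not_bddBelow hbdd
    obtain ⟨d, hd0, hdW, hdq⟩ := existsNegRay W q bagg hbdd
    have hptw : ∀ ξ ∈ P, lpVal W q (h ξ - (Matrix.of (T ξ)).mulVec xbar) = 0 := by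
      intro ξ hξ
      apply Real.sInf_of_not_bddBelow
      rintro ⟨B, hB⟩
      set qy : ℝ := q ⬝ᵥ yhat ξ with hqy
      set s : ℝ := max 0 ((B - qy) / (q ⬝ᵥ d) + 1) with hs
      have hs0 : 0 ≤ s := le_max_left _ _
      have hsgt : (B - qy) / (q ⬝ᵥ d) < s := lt_of_lt_of_le (lt_add_one _) (le_max_right _ _)
      have hval : q ⬝ᵥ (yhat ξ + s • d) = qy + s * (q ⬝ᵥ d) := by
        simp [dotProduct, mul_add, Finset.sum_add_distrib, Finset.mul_sum, mul_left_comm, hqy]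
      have hmem : (qy + s * (q ⬝ᵥ d)) ∈ {v : ℝ | ∃ y : Fin n → ℝ, (∀ j, 0 ≤ y j) ∧
          W.mulVec y = h ξ - (Matrix.of (T ξ)).mulVec xbar ∧ v = q ⬝ᵥ y} := by
        refine ⟨yhat ξ + s • d, fun j => ?_, ?_, hval.symm⟩
        · have := hy_nonneg ξ hξ j
          have := hd0 j
          have : 0 ≤ s * d j := mul_nonneg hs0 (hd0 j)
          simp only [Pi.add_apply, Pi.smul_apply, smul_eq_mul]
          linarith [hy_nonneg ξ hξ j]
        · rw [Matrix.mulVec_add, Matrix.mulVec_smul, hdW, hy_feas ξ hξ]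
          simp
      have hlt : qy + s * (q ⬝ᵥ d) < B := by
        have : s * (q ⬝ᵥ d) < B - qy := by
          rw [div_lt_iff_of_neg hdq] at hsgt
          linarith
        linarith
      exact absurd (hB hmem) (not_le.mpr hlt)
    have hRHS : condAvg μ P (fun ξ => lpVal W q (h ξ - (Matrix.of (T ξ)).mulVec xbar)) = 0 := by
      rw [condAvg]
      rw [setIntegral_congr_fun hPmeas (g := fun _ => (0:ℝ)) fun ξ hξ => hptw ξ hξ]
      simp
    rw [hL, hRHS]
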